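/- Let N be a k-bounded data Petri net with injective labelling ℓ, B = DPNtoDDS(N), and CG the constraint graph of B. Then N satisfies property (P3) if and only if for every transition t ∈ T of N the label ℓ(t) labels some edge of CG. -/
import Mathlib


/-! ## Basic framework: values, assignments, formulas -/

/-- Values: booleans, integers, or rationals. -/
abbrev Val : Type := Bool ⊕ ℤ ⊕ ℚ

/-- An assignment of values to the variables in `V`. -/
abbrev Assign (V : Type) : Type := V → Val

/-- A formula over variables `V`, represented semantically by its set of satisfying
assignments.  (Formulas are taken up to logical equivalence, which by `funext`/`propext`
coincides with equality of this representation; by quantifier elimination for linear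
arithmetic, existential quantification stays within the language.) -/
def Formula (V : Type) : Type := Assign V → Prop

/-- Satisfiability of a formula. -/
def Formula.Sat {V : Type} (φ : Formula V) : Prop := ∃ α, φ α

/-- `C_α` : the formula `⋀_{v ∈ V} v = α(v)`. -/
def Cof {V : Type} (α : Assign V) : Formula V := fun α' => ∀ v, α' v = α v

/-- A transition variable assignment: values for the annotated variables
`V^r ∪ V^w` (read copies and written copies of the variables). -/
structure TAssign (V : Type) where
  read : Assign V
  write : Assign V

/-- A constraint of linear arithmetic over the annotated variables `V^r ∪ V^w`,
represented semantically, together with the sets `read`/`write` of variables whose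
read resp. written copies occur in it (`sat_congr` expresses that the constraint
depends only on occurring annotated variables). -/
structure Guard (V : Type) where
  sat : TAssign V → Prop
  reads : Set V
  writes : Set V
  sat_congr : ∀ β β' : TAssign V,
    (∀ v ∈ reads, β.read v = β'.read v) →
    (∀ v ∈ writes, β.write v = β'.write v) → (sat β ↔ sat β')

/-! ## Data-aware dynamic systems (DDS) -/

/-- A data-aware dynamic system `⟨B, b_I, A, Δ, B_F, V, α_I, guard⟩`
with states drawn from `S`, actions from `A` and process variables `V`. -/
structure DDS (S A V : Type) where
  states : Set S
  init : S
  trans : Set (S × A × S)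
  finals : Set S
  alphaI : Assign V
  guard : A → Guard V

/-- A step `(b, α) →(a,β) (b', α')` of a DDS. -/
def DDS.Step {S A V : Type} (D : DDS S A V) (b : S) (α : Assign V) (a : A)
    (β : TAssign V) (b' : S) (α' : Assign V) : Prop :=
  (b, a, b') ∈ D.trans ∧
  (∀ v, β.read v = α v) ∧
  (∀ v ∈ (D.guard a).writes, α' v = β.write v) ∧
  (∀ v, v ∉ (D.guard a).writes → α' v = α v) ∧
  (D.guard a).sat β

/-- `(b, α) →* (b', α')`: a derivation (finite sequence of consecutive steps) exists. -/
inductive DDS.Reach {S A V : Type} (D : DDS S A V) :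
    S × Assign V → S × Assign V → Prop
  | refl (c : S × Assign V) : Reach D c c
  | step {c : S × Assign V} {b b' : S} {α α' : Assign V} {a : A} {β : TAssign V} :
      Reach D c (b, α) → D.Step b α a β b' α' → Reach D c (b', α')

/-- The DDS has a blocked state: a run reaches a configuration from which
no final state is reachable. -/
def DDS.HasBlockedState {S A V : Type} (D : DDS S A V) : Prop :=
  ∃ b α, D.Reach (D.init, D.alphaI) (b, α) ∧
    ¬ ∃ bf α', bf ∈ D.finals ∧ D.Reach (b, α) (bf, α')

/-- A state `b` is reachable in the DDS. -/
def DDS.ReachableState {S A V : Type} (D : DDS S A V) (b : S) : Prop :=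
  ∃ α, D.Reach (D.init, D.alphaI) (b, α)

/-- A transition `(b, a, b') ∈ Δ` is reachable: some run traverses it. -/
def DDS.ReachableTrans {S A V : Type} (D : DDS S A V) (b : S) (a : A) (b' : S) : Prop :=
  (b, a, b') ∈ D.trans ∧
  ∃ α β α', D.Reach (D.init, D.alphaI) (b, α) ∧ D.Step b α a β b' α'

/-- Derivations recording their abstraction: `DDS.Deriv D b α σ b' α'` means there is a
derivation `(b, α) →* (b', α')` whose abstraction (symbolic derivation) is
`b →a₁ b₁ →a₂ ⋯ →aₙ bₙ`, recorded as the trace `σ = [(a₁,b₁),…,(aₙ,bₙ)]`. -/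
inductive DDS.Deriv {S A V : Type} (D : DDS S A V) :
    S → Assign V → List (A × S) → S → Assign V → Prop
  | refl (b : S) (α : Assign V) : Deriv D b α [] b α
  | step {b : S} {α : Assign V} {σ : List (A × S)} {b' : S} {α' : Assign V}
      {a : A} {β : TAssign V} {b'' : S} {α'' : Assign V} :
      Deriv D b α σ b' α' → D.Step b' α' a β b'' α'' →
      Deriv D b α (σ ++ [(a, b'')]) b'' α''

/-- Symbolic derivations: `DDS.SymDeriv D b σ b'` means `b →a₁ b₁ ⋯ →aₙ bₙ = b'`
is a symbolic derivation (only states and actions, i.e. the trace `σ`). -/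
inductive DDS.SymDeriv {S A V : Type} (D : DDS S A V) : S → List (A × S) → S → Prop
  | refl (b : S) : SymDeriv D b [] b
  | step {b : S} {σ : List (A × S)} {b' : S} {a : A} {b'' : S} :
      SymDeriv D b σ b' → (b', a, b'') ∈ D.trans → SymDeriv D b (σ ++ [(a, b'')]) b''

/-! ## Constraint graphs -/

/-- `update(φ, a)`: the formula (it exists by quantifier elimination) that is logically
equivalent to `∃U. φ[U/V] ∧ Δ_a[U/V^r, V/V^w]`, where `Δ_a` is the transition formula
`guard(a) ∧ ⋀_{v ∉ write(a)} v^w = v^r`. -/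
def DDS.update {S A V : Type} (D : DDS S A V) (φ : Formula V) (a : A) : Formula V :=
  fun α' => ∃ u : Assign V, φ u ∧ (D.guard a).sat ⟨u, α'⟩ ∧
    ∀ v, v ∉ (D.guard a).writes → α' v = u v

/-- Nodes of the constraint graph `CG(b₀, φ₀)` (with initial node `(b₀, φ₀)`);
for `CG(b₀, α)` take `φ₀ = C_α`.  Formulas are taken up to logical equivalence,
which in the semantic representation is equality. -/
inductive DDS.CGNode {S A V : Type} (D : DDS S A V) (b0 : S) (φ0 : Formula V) :
    S → Formula V → Prop
  | init : CGNode D b0 φ0 b0 φ0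
  | step {b : S} {φ : Formula V} {a : A} {b' : S} :
      CGNode D b0 φ0 b φ → (b, a, b') ∈ D.trans → Formula.Sat (D.update φ a) →
      CGNode D b0 φ0 b' (D.update φ a)

/-- Edges `(b, φ) →a (b', φ')` of the constraint graph with initial node `(b₀, φ₀)`. -/
def DDS.CGEdge {S A V : Type} (D : DDS S A V) (b0 : S) (φ0 : Formula V)
    (b : S) (φ : Formula V) (a : A) (b' : S) (φ' : Formula V) : Prop :=
  D.CGNode b0 φ0 b φ ∧ (b, a, b') ∈ D.trans ∧ Formula.Sat (D.update φ a) ∧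
    φ' = D.update φ a

/-- Paths in the constraint graph with initial node `(b₀, φ₀)`, from the initial node to a
node `(b, φ)`, recording the symbolic derivation `σ(π)` as the trace `σ : List (A × S)`. -/
inductive DDS.CGPath {S A V : Type} (D : DDS S A V) (b0 : S) (φ0 : Formula V) :
    S → Formula V → List (A × S) → Prop
  | refl : CGPath D b0 φ0 b0 φ0 []
  | step {b : S} {φ : Formula V} {σ : List (A × S)} {a : A} {b' : S} :
      CGPath D b0 φ0 b φ σ → (b, a, b') ∈ D.trans → Formula.Sat (D.update φ a) →
      CGPath D b0 φ0 b' (D.update φ a) (σ ++ [(a, b')])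

/-! ## The constraint graph `CG(b)` with placeholder variables `V₀` -/

/-- Lift a guard over `V` to one over `V ⊕ V`, where `Sum.inl v` is the variable `v ∈ V`
and `Sum.inr v` is the placeholder variable `v₀ ∈ V₀` (which is never read nor written). -/
def Guard.lift {V : Type} (g : Guard V) : Guard (V ⊕ V) where
  sat β := g.sat ⟨fun v => β.read (Sum.inl v), fun v => β.write (Sum.inl v)⟩
  reads := Sum.inl '' g.reads
  writes := Sum.inl '' g.writes
  sat_congr := by
    intro β β' hr hw
    apply g.sat_congr
    · intro v hv; exact hr _ ⟨v, hv, rfl⟩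
    · intro v hv; exact hw _ ⟨v, hv, rfl⟩

/-- Lift a DDS over variables `V` to one over `V ⊕ V`, where the second copy plays the
role of the fresh placeholder variables `V₀` (same states and transitions). -/
def DDS.lift {S A V : Type} (D : DDS S A V) : DDS S A (V ⊕ V) where
  states := D.states
  init := D.init
  trans := D.trans
  finals := D.finals
  alphaI := Sum.elim D.alphaI D.alphaI
  guard a := (D.guard a).lift

/-- The initial-node formula `⋀_{v ∈ V} v = v₀` of the constraint graph `CG(b)`. -/
def placeholderInit (V : Type) : Formula (V ⊕ V) :=
  fun γ => ∀ v, γ (Sum.inl v) = γ (Sum.inr v)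

/-- `final(b)`: the set of formulas `ψ` such that `(b_F, ψ)` is a node of `CG(b)`. -/
def DDS.finalFormulas {S A V : Type} (D : DDS S A V) (b bF : S) :
    Set (Formula (V ⊕ V)) :=
  {ψ | DDS.CGNode D.lift b (placeholderInit V) bF ψ}

/-- `blocked(b, φ)`: the formula (over the placeholder variables `V₀`, so represented as a
predicate on assignments to `V₀ ≅ V`) `φ[V₀/V] ∧ ¬(∃V. ⋁_{ψ ∈ final(b)} ψ)`. -/
def DDS.blocked {S A V : Type} (D : DDS S A V) (bF : S) (b : S) (φ : Formula V) :
    Formula V :=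
  fun α0 => φ α0 ∧
    ¬ ∃ (αv : Assign V) (ψ : Formula (V ⊕ V)),
        ψ ∈ D.finalFormulas b bF ∧ ψ (Sum.elim αv α0)

/-! ## Data Petri nets (DPN) -/

/-- A data Petri net `⟨P, T, F, ℓ, A, V, guard⟩` together with its initial marking `M_I`,
final marking `M_F` and initial assignment `α₀`.  The flow relation is split into its
place-to-transition and transition-to-place parts. -/
structure DPN (P T A V : Type) where
  flowPT : P → T → ℕ
  flowTP : T → P → ℕ
  lab : T → A
  guard : T → Guard V
  MI : P → ℕ
  MF : P → ℕ
  alpha0 : Assign V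

/-- A transition firing `(M, α) →(t,β) (M', α')` of a DPN. -/
def DPN.Firing {P T A V : Type} (N : DPN P T A V) (M : P → ℕ) (α : Assign V)
    (t : T) (β : TAssign V) (M' : P → ℕ) (α' : Assign V) : Prop :=
  (∀ v ∈ (N.guard t).reads, β.read v = α v) ∧
  (N.guard t).sat β ∧
  (∀ p, N.flowPT p t ≤ M p) ∧
  (∀ p, M' p = M p - N.flowPT p t + N.flowTP t p) ∧
  (∀ v ∈ (N.guard t).writes, α' v = β.write v) ∧
  (∀ v, v ∉ (N.guard t).writes → α' v = α v)

/-- `(M, α) →* (M', α')`: a sequence of transition firings of the DPN. -/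
inductive DPN.Reach {P T A V : Type} (N : DPN P T A V) :
    (P → ℕ) × Assign V → (P → ℕ) × Assign V → Prop
  | refl (c : (P → ℕ) × Assign V) : Reach N c c
  | step {c : (P → ℕ) × Assign V} {M M' : P → ℕ} {α α' : Assign V}
      {t : T} {β : TAssign V} :
      Reach N c (M, α) → N.Firing M α t β M' α' → Reach N c (M', α')

/-- The DPN is `k`-bounded. -/
def DPN.Bounded {P T A V : Type} (N : DPN P T A V) (k : ℕ) : Prop :=
  ∀ M α, N.Reach (N.MI, N.alpha0) (M, α) → ∀ p, M p ≤ k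

/-- Property (P1): every reachable state can be continued to a process run. -/
def DPN.P1 {P T A V : Type} (N : DPN P T A V) : Prop :=
  ∀ M α, N.Reach (N.MI, N.alpha0) (M, α) → ∃ α', N.Reach (M, α) (N.MF, α')

/-- Property (P2): termination is clean. -/
def DPN.P2 {P T A V : Type} (N : DPN P T A V) : Prop :=
  ∀ M α, N.Reach (N.MI, N.alpha0) (M, α) → (∀ p, N.MF p ≤ M p) → M = N.MF

/-- Property (P3): no dead transitions. -/
def DPN.P3 {P T A V : Type} (N : DPN P T A V) : Prop :=
  ∀ t : T, ∃ M α β M' α',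
    N.Reach (N.MI, N.alpha0) (M, α) ∧ N.Firing M α t β M' α'

/-- Data-aware soundness: (P1) ∧ (P2) ∧ (P3). -/
def DPN.Sound {P T A V : Type} (N : DPN P T A V) : Prop := N.P1 ∧ N.P2 ∧ N.P3

/-- `B = DPNtoDDS(N)` for a `k`-bounded DPN `N` with injective labelling: the states of `B`
are the `k`-bounded markings, initial state `M_I`, final states `{M_F}`, initial assignment
`α₀`, `guard'(ℓ(t)) = guard(t)`, and `(M, a, M') ∈ Δ` iff there is `t` with `ℓ(t) = a`,
`M(p) ≥ F(p,t)` and `M'(p) = M(p) − F(p,t) + F(t,p)` for all `p`. -/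
def IsDPNtoDDS {P T A V : Type} (N : DPN P T A V) (k : ℕ) (D : DDS (P → ℕ) A V) : Prop :=
  D.states = {M | ∀ p, M p ≤ k} ∧
  D.init = N.MI ∧
  D.finals = {N.MF} ∧
  D.alphaI = N.alpha0 ∧
  (∀ t, D.guard (N.lab t) = N.guard t) ∧
  ∀ M a M', (M, a, M') ∈ D.trans ↔
    ((∀ p, M p ≤ k) ∧ (∀ p, M' p ≤ k) ∧
      ∃ t, N.lab t = a ∧ (∀ p, N.flowPT p t ≤ M p) ∧
        (∀ p, M' p = M p - N.flowPT p t + N.flowTP t p))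
section Aux

variable {P T A V : Type} {N : DPN P T A V} {k : ℕ} {D : DDS (P → ℕ) A V}

/-- If `(b, φ)` is a node of `CG` and `α` satisfies `φ`, then `(b, α)` is reachable. -/
lemma cgnode_sat_reach {b : P → ℕ} {φ : Formula V}
    (h : D.CGNode D.init (Cof D.alphaI) b φ) :
    ∀ α, φ α → D.Reach (D.init, D.alphaI) (b, α) := by
  induction h with
  | init =>
    intro α hα
    have : α = D.alphaI := funext hα
    subst this; exact DDS.Reach.refl _
  | @step b φ a b' hnode htrans hsat ih =>
    intro α' hα'
    obtain ⟨u, hu, hsat', hframe⟩ := hα'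
    exact DDS.Reach.step (ih u hu)
      ⟨htrans, fun v => rfl, fun v _ => rfl, fun v hv => hframe v hv, hsat'⟩

/-- Conversely, every reachable configuration satisfies some node formula. -/
lemma reach_cgnode_sat :
    ∀ c, D.Reach (D.init, D.alphaI) c →
      ∃ φ, D.CGNode D.init (Cof D.alphaI) c.1 φ ∧ φ c.2 := by
  intro c h
  induction h with
  | refl => exact ⟨Cof D.alphaI, DDS.CGNode.init, fun v => rfl⟩
  | @step b b' α α' a β hreach hstep ih =>
    obtain ⟨φ, hnode, hφ⟩ := ih
    obtain ⟨htrans, hread, hwrite, hframe, hsat⟩ := hstep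
    have hsat' : (D.guard a).sat ⟨α, α'⟩ :=
      ((D.guard a).sat_congr β ⟨α, α'⟩ (fun v _ => hread v)
        (fun v hv => (hwrite v hv).symm)).mp hsat
    have hupd : D.update φ a α' := ⟨α, hφ, hsat', fun v hv => hframe v hv⟩
    exact ⟨D.update φ a, DDS.CGNode.step hnode htrans ⟨α', hupd⟩, hupd⟩

/-- Reachability in the DPN implies reachability in `DPNtoDDS(N)`. -/
lemma dpn_reach_dds (hDDS : IsDPNtoDDS N k D) (hbound : N.Bounded k) :
    ∀ c, N.Reach (N.MI, N.alpha0) c → D.Reach (D.init, D.alphaI) c := by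
  obtain ⟨hst, hinit, hfin, halpha, hguard, htr⟩ := hDDS
  intro c h
  induction h with
  | refl => rw [hinit, halpha]; exact DDS.Reach.refl _
  | @step M M' α α' t β hreach hfire ih =>
    obtain ⟨hread, hsat, hflow, hM', hwrite, hframe⟩ := hfire
    have hMb : ∀ p, M p ≤ k := hbound M α hreach
    have hM'b : ∀ p, M' p ≤ k := hbound M' α'
      (DPN.Reach.step hreach ⟨hread, hsat, hflow, hM', hwrite, hframe⟩)
    have htrans : (M, N.lab t, M') ∈ D.trans :=
      (htr M (N.lab t) M').mpr ⟨hMb, hM'b, t, rfl, hflow, hM'⟩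
    have hsat' : (D.guard (N.lab t)).sat ⟨α, β.write⟩ := by
      rw [hguard t]
      exact ((N.guard t).sat_congr β ⟨α, β.write⟩ (fun v hv => hread v hv)
        (fun v _ => rfl)).mp hsat
    refine DDS.Reach.step ih ⟨htrans, fun v => rfl, ?_, ?_, hsat'⟩
    · rw [hguard t]; exact fun v hv => hwrite v hv
    · rw [hguard t]; exact hframe

/-- Reachability in `DPNtoDDS(N)` implies reachability in the DPN. -/
lemma dds_reach_dpn (hDDS : IsDPNtoDDS N k D) :
    ∀ c, D.Reach (D.init, D.alphaI) c → N.Reach (N.MI, N.alpha0) c := by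
  obtain ⟨hst, hinit, hfin, halpha, hguard, htr⟩ := hDDS
  intro c h
  induction h with
  | refl => rw [hinit, halpha] at *; exact DPN.Reach.refl _
  | @step M M' α α' a β hreach hstep ih =>
    obtain ⟨htrans, hread, hwrite, hframe, hsat⟩ := hstep
    obtain ⟨hMb, hM'b, t, hlabt, hflow, hM'⟩ := (htr M a M').mp htrans
    subst hlabt
    rw [hguard t] at hwrite hframe hsat
    exact DPN.Reach.step ih
      ⟨fun v _ => hread v, hsat, hflow, hM', hwrite, hframe⟩

end Aux

/-- Let `N` be a `k`-bounded DPN with injective labelling,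
`B = DPNtoDDS(N)` and `CG` its constraint graph.  Then `N` satisfies (P3) iff for every
transition `t` of `N` the label `ℓ(t)` labels some edge of `CG`. -/
theorem dpn_P3_iff_label_on_cg_edge {P T A V : Type}
    [Finite P] [Finite T] [Finite A] [Finite V]
    (N : DPN P T A V) (k : ℕ) (D : DDS (P → ℕ) A V)
    (hbound : N.Bounded k) (hinj : Function.Injective N.lab)
    (hDDS : IsDPNtoDDS N k D) :
    N.P3 ↔ ∀ t : T, ∃ (M : P → ℕ) (φ : Formula V) (M' : P → ℕ) (φ' : Formula V),
      D.CGEdge D.init (Cof D.alphaI) M φ (N.lab t) M' φ' := by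
  obtain ⟨hst, hinit, hfin, halpha, hguard, htr⟩ := hDDS
  have hDDS' : IsDPNtoDDS N k D := ⟨hst, hinit, hfin, halpha, hguard, htr⟩
  constructor
  · intro hP3 t
    obtain ⟨M, α, β, M', α', hreach, hfire⟩ := hP3 t
    obtain ⟨hread, hsat, hflow, hM', hwrite, hframe⟩ := hfire
    have hDreach : D.Reach (D.init, D.alphaI) (M, α) :=
      dpn_reach_dds hDDS' hbound _ hreach
    obtain ⟨φ, hnode, hφ⟩ := reach_cgnode_sat (M, α) hDreach
    have hMb : ∀ p, M p ≤ k := hbound M α hreach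
    have hM'b : ∀ p, M' p ≤ k := hbound M' α'
      (DPN.Reach.step hreach ⟨hread, hsat, hflow, hM', hwrite, hframe⟩)
    have htrans : (M, N.lab t, M') ∈ D.trans :=
      (htr M (N.lab t) M').mpr ⟨hMb, hM'b, t, rfl, hflow, hM'⟩
    have hsat' : (D.guard (N.lab t)).sat ⟨α, α'⟩ := by
      rw [hguard t]
      exact ((N.guard t).sat_congr β ⟨α, α'⟩ (fun v hv => hread v hv)
        (fun v hv => (hwrite v hv).symm)).mp hsat
    have hupd : D.update φ (N.lab t) α' := by
      refine ⟨α, hφ, hsat', ?_⟩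
      rw [hguard t]; exact hframe
    exact ⟨M, φ, M', D.update φ (N.lab t), hnode, htrans, ⟨α', hupd⟩, rfl⟩
  · intro hedge t
    obtain ⟨M, φ, M', φ', hnode, htrans, hsat, hφ'⟩ := hedge t
    obtain ⟨α', u, hu, hsatu, hframe⟩ := hsat
    have hDreach : D.Reach (D.init, D.alphaI) (M, u) :=
      cgnode_sat_reach hnode u hu
    have hNreach : N.Reach (N.MI, N.alpha0) (M, u) :=
      dds_reach_dpn hDDS' _ hDreach
    obtain ⟨hMb, hM'b, t', hlabt, hflow, hM'⟩ := (htr M (N.lab t) M').mp htrans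
    have ht' : t' = t := hinj hlabt
    subst ht'
    rw [hguard t'] at hsatu hframe
    exact ⟨M, u, ⟨u, α'⟩, M', α', hNreach,
      fun v _ => rfl, hsatu, hflow, hM', fun v _ => rfl, hframe⟩
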